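/- Let Λ be an ℝ-linear map on n×n complex matrices that sends Hermitian matrices to Hermitian matrices, and let Λ* be a trace adjoint of Λ. Let ρ, σ be Hermitian matrices and let B be a real-valued function on pairs of Hermitian matrices such that: (a) for all Hermitian M₁, M₂ in some neighborhood of 0, B(ρ+M₁, σ+M₂) ≥ B(Λ(ρ+M₁), Λ(σ+M₂)); (b) the map X ↦ B(X, σ) on the real vector space of Hermitian matrices is Fréchet differentiable at ρ with derivative M ↦ tr(G·M) for a Hermitian matrix G, and the map X ↦ B(X, Λ(σ)) is Fréchet differentiable at Λ(ρ) with derivative M ↦ tr(G'·M) for a Hermitian matrix G'; and (c) B(ρ,σ) = B(Λ(ρ),Λ(σ)). Then G = Λ*(G'). -/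

import Mathlib

open Matrix

attribute [local instance] Matrix.frobeniusNormedAddCommGroup Matrix.frobeniusNormedSpace

/-- If the data processing inequality for a differentiable distinguishability
measure `B` holds in a neighborhood of `(ρ, σ)` and is saturated at `(ρ, σ)`, then the
(Hilbert–Schmidt duals of the) Fréchet derivatives with respect to the first argument satisfy
`G = Λ*(G')`. -/
lemma aux_trace_std {n : Type*} [Fintype n] [DecidableEq n]
    (X : Matrix n n ℂ) (i j : n) : (X * single j i 1).trace = X i j := by
  simp [Matrix.trace, Matrix.diag, Matrix.mul_apply, Matrix.single, Finset.sum_comm,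
    ite_and]

lemma aux_zero {n : Type*} [Fintype n] [DecidableEq n] (X : Matrix n n ℂ)
    (h : ∀ M : Matrix n n ℂ, M.IsHermitian → (X * M).trace = 0) : X = 0 := by
  have hall : ∀ N : Matrix n n ℂ, (X * N).trace = 0 := by
    intro N
    have h1 := h (N + Nᴴ) (by simp [Matrix.IsHermitian, conjTranspose_add, add_comm])
    have h2 := h (Complex.I • (N - Nᴴ)) (by
      simp only [Matrix.IsHermitian, conjTranspose_smul, conjTranspose_sub,
        conjTranspose_conjTranspose, Complex.star_def, Complex.conj_I]
      module)
    rw [mul_add, trace_add] at h1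
    rw [mul_smul_comm, trace_smul, smul_eq_mul, mul_sub, trace_sub, mul_eq_zero] at h2
    rcases h2 with h2 | h2
    · exact absurd h2 Complex.I_ne_zero
    · linear_combination (h1 + h2) / 2
  ext i j
  simpa [aux_trace_std] using hall (single j i 1)

lemma aux_real {n : Type*} [Fintype n] [DecidableEq n] {A B : Matrix n n ℂ}
    (hA : A.IsHermitian) (hB : B.IsHermitian) :
    star ((A * B).trace) = (A * B).trace := by
  rw [← trace_conjTranspose, conjTranspose_mul, hA.eq, hB.eq, trace_mul_comm]

theorem gradient_eq_of_dpi_saturation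
    {n : Type*} [Fintype n] [DecidableEq n] [Nonempty n]
    (Λ Λstar : Matrix n n ℂ →ₗ[ℝ] Matrix n n ℂ)
    (hΛherm : ∀ A : Matrix n n ℂ, A.IsHermitian → (Λ A).IsHermitian)
    (hadj : ∀ A B : Matrix n n ℂ, (Λstar A * B).trace = (A * Λ B).trace)
    (ρ σ : Matrix n n ℂ) (hρ : ρ.IsHermitian) (hσ : σ.IsHermitian)
    (B : Matrix n n ℂ → Matrix n n ℂ → ℝ)
    -- (a) DPI in a neighborhood of (ρ, σ):
    (hDPI : ∃ ε > 0, ∀ M₁ M₂ : Matrix n n ℂ, M₁.IsHermitian → M₂.IsHermitian →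
      ‖M₁‖ < ε → ‖M₂‖ < ε →
      B (ρ + M₁) (σ + M₂) ≥ B (Λ (ρ + M₁)) (Λ (σ + M₂)))
    -- (b) Fréchet differentiability on the real vector space of Hermitian matrices,
    -- with derivatives given by trace against the Hermitian matrices G and G':
    (G G' : Matrix n n ℂ) (hG : G.IsHermitian) (hG' : G'.IsHermitian)
    (L₁ : (selfAdjoint.submodule ℝ (Matrix n n ℂ)) →L[ℝ] ℝ)
    (hL₁ : ∀ M : selfAdjoint.submodule ℝ (Matrix n n ℂ),
      L₁ M = ((G * (M : Matrix n n ℂ)).trace).re)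
    (hB₁ : HasFDerivAt
      (fun X : selfAdjoint.submodule ℝ (Matrix n n ℂ) => B (X : Matrix n n ℂ) σ)
      L₁ ⟨ρ, hρ⟩)
    (L₂ : (selfAdjoint.submodule ℝ (Matrix n n ℂ)) →L[ℝ] ℝ)
    (hL₂ : ∀ M : selfAdjoint.submodule ℝ (Matrix n n ℂ),
      L₂ M = ((G' * (M : Matrix n n ℂ)).trace).re)
    (hB₂ : HasFDerivAt
      (fun X : selfAdjoint.submodule ℝ (Matrix n n ℂ) => B (X : Matrix n n ℂ) (Λ σ))
      L₂ ⟨Λ ρ, hΛherm ρ hρ⟩)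
    -- (c) saturation of the DPI at (ρ, σ):
    (hsat : B ρ σ = B (Λ ρ) (Λ σ)) :
    G = Λstar G' := by
    classical
  obtain ⟨ε, hε, hdpi⟩ := hDPI
  let S := selfAdjoint.submodule ℝ (Matrix n n ℂ)
  -- the Hermiticity-preserving map as a linear map on the submodule
  let F : S →ₗ[ℝ] S :=
    { toFun := fun X => ⟨Λ X, hΛherm X X.2⟩
      map_add' := fun X Y => Subtype.ext (by simp)
      map_smul' := fun c X => Subtype.ext (by simp) }
  let Fc : S →L[ℝ] S := ⟨F, F.continuous_of_finiteDimensional⟩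
  -- the function with a local minimum at ρ
  have hmin : IsLocalMin
      (fun X : S => B (X : Matrix n n ℂ) σ - B (Λ (X : Matrix n n ℂ)) (Λ σ)) ⟨ρ, hρ⟩ := by
    unfold IsLocalMin IsMinFilter
    filter_upwards [Metric.ball_mem_nhds (⟨ρ, hρ⟩ : S) hε] with X hX
    have hM : ((X : Matrix n n ℂ) - ρ).IsHermitian := X.2.sub hρ
    have hnorm : ‖(X : Matrix n n ℂ) - ρ‖ < ε := by
      have := mem_ball_iff_norm.mp hX
      exact this
    have := hdpi ((X : Matrix n n ℂ) - ρ) 0 hM (by simp [Matrix.IsHermitian])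
      hnorm (by simpa using hε)
    simp only [add_sub_cancel, add_zero] at this
    simp only [hsat]
    linarith
  have hcomp : HasFDerivAt
      (fun X : S => B (X : Matrix n n ℂ) σ - B (Λ (X : Matrix n n ℂ)) (Λ σ))
      (L₁ - L₂.comp Fc) ⟨ρ, hρ⟩ := by
    exact hB₁.sub (by have := hB₂.comp (⟨ρ, hρ⟩ : S) Fc.hasFDerivAt; exact this)
  have hL0 : L₁ - L₂.comp Fc = 0 := hmin.hasFDerivAt_eq_zero hcomp
  -- hence the real parts of the traces agree
  have hre : ∀ M : S, ((G * (M : Matrix n n ℂ)).trace).re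
      = ((Λstar G' * (M : Matrix n n ℂ)).trace).re := by
    intro M
    have := ContinuousLinearMap.ext_iff.mp hL0 M
    rw [ContinuousLinearMap.sub_apply, ContinuousLinearMap.comp_apply,
      ContinuousLinearMap.zero_apply, sub_eq_zero, hL₁, hL₂] at this
    rw [this, hadj]
    rfl
  -- Λstar G' is Hermitian
  have hreal' : ∀ M : Matrix n n ℂ, M.IsHermitian →
      star ((Λstar G' * M).trace) = (Λstar G' * M).trace := by
    intro M hM
    rw [hadj, aux_real hG' (hΛherm M hM)]
  have hΛsG' : (Λstar G').IsHermitian := by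
    have hz : (Λstar G')ᴴ - Λstar G' = 0 := by
      apply aux_zero
      intro M hM
      have h1 : ((Λstar G')ᴴ * M).trace = star ((Λstar G' * M).trace) := by
        rw [← hM.eq, ← conjTranspose_mul, trace_conjTranspose, hM.eq, trace_mul_comm]
      rw [sub_mul, trace_sub, h1, hreal' M hM, sub_self]
    rw [Matrix.IsHermitian, ← sub_eq_zero]
    exact hz
  -- conclude
  have hz : G - Λstar G' = 0 := by
    apply aux_zero
    intro M hM
    have heq : (G * M).trace = (Λstar G' * M).trace := by
      have h1 := aux_real hG hM
      have h2 := hreal' M hM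
      have h3 := hre ⟨M, hM⟩
      have i1 : (G * M).trace.im = 0 := by
        have := congrArg Complex.im h1
        simp at this
        linarith
      have i2 : (Λstar G' * M).trace.im = 0 := by
        have := congrArg Complex.im h2
        simp at this
        linarith
      apply Complex.ext
      · exact h3
      · rw [i1, i2]
    rw [sub_mul, trace_sub, heq, sub_self]
  rw [← sub_eq_zero]
  exact hz
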